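/- Let t ≥ 1 and b be positive integers and a_1, …, a_{3t} positive integers with ∑_{i=1}^{3t} a_i = t·b and b/4 < a_i < b/2 for all i. Construct a DAG D with a fixed processor assignment p : V → {1, 2} as follows: a 'main' directed path of 2tb nodes whose processor assignment alternates in runs of length b, starting with b nodes on processor 1, then b nodes on processor 2, and so on; and, for each i ∈ [3t], a disjoint directed path of 2a_i nodes consisting of a_i nodes on processor 2 followed by a_i nodes on processor 1. Then D admits a schedule respecting p with makespan 2tb if and only if the multiset {a_1, …, a_{3t}} can be partitioned into t triples each summing to b. -/

import Mathlib

open Finset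

/-- The arc relation of the 3-partition scheduling DAG: a main directed path on
`2·t·b` nodes, together with, for each `i`, a disjoint directed path on `2·(a i)`
nodes. -/
def tpArc (t b : ℕ) (a : Fin (3 * t) → ℕ) :
    (Fin (2 * t * b) ⊕ (Σ i : Fin (3 * t), Fin (2 * a i))) →
    (Fin (2 * t * b) ⊕ (Σ i : Fin (3 * t), Fin (2 * a i))) → Prop
  | Sum.inl j, Sum.inl j' => (j' : ℕ) = (j : ℕ) + 1
  | Sum.inr ⟨i, x⟩, Sum.inr ⟨i', x'⟩ => (i : ℕ) = (i' : ℕ) ∧ (x' : ℕ) = (x : ℕ) + 1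
  | _, _ => False

/-- The fixed processor assignment: the main path alternates in runs of length `b`,
starting with `b` nodes on processor `1`, then `b` nodes on processor `2`, and so on;
the `i`-th small path consists of `a i` nodes on processor `2` followed by `a i` nodes
on processor `1`. -/
def tpProc (t b : ℕ) (a : Fin (3 * t) → ℕ) :
    (Fin (2 * t * b) ⊕ (Σ i : Fin (3 * t), Fin (2 * a i))) → ℕ
  | Sum.inl j => if (j : ℕ) / b % 2 = 0 then 1 else 2
  | Sum.inr ⟨i, x⟩ => if (x : ℕ) < a i then 2 else 1

lemma tp_parity_count (r n : ℕ) :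
    ((range n).filter (fun q => q % 2 = r)).card = (n + 1 - r) / 2 ∨ 2 ≤ r := by
  rcases Nat.lt_or_ge r 2 with hr | hr
  · left
    induction n with
    | zero => simp; omega
    | succ n ih =>
      rw [range_add_one, filter_insert]
      by_cases h : n % 2 = r
      · rw [if_pos h, card_insert_of_notMem (by simp)]
        omega
      · rw [if_neg h]
        omega
  · right; exact hr

lemma tp_parity_count' (r n : ℕ) (hr : r < 2) :
    ((range n).filter (fun q => q % 2 = r)).card = (n + 1 - r) / 2 := by
  rcases tp_parity_count r n with h | h
  · exact h
  · omega

lemma tp_block_count (b r n : ℕ) (hb : 0 < b) :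
    ((range (n * b)).filter (fun j => j / b % 2 = r)).card
      = ((range n).filter (fun q => q % 2 = r)).card * b := by
  induction n with
  | zero => simp
  | succ n ih =>
    have hsplit : range ((n+1) * b) = range (n * b) ∪ Ico (n * b) (n * b + b) := by
      have h1 : (n+1) * b = n * b + b := by ring
      rw [h1, range_eq_Ico, range_eq_Ico]
      exact (Finset.Ico_union_Ico_eq_Ico (Nat.zero_le _) (Nat.le_add_right _ _)).symm
    have hdisj : Disjoint ((range (n * b)).filter (fun j => j / b % 2 = r))
        ((Ico (n * b) (n * b + b)).filter (fun j => j / b % 2 = r)) := by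
      apply Finset.disjoint_filter_filter
      rw [Finset.disjoint_left]
      intro x hx hx'
      simp only [mem_range] at hx
      simp only [mem_Ico] at hx'
      omega
    have hdiv : ∀ j ∈ Ico (n * b) (n * b + b), j / b = n := by
      intro j hj
      simp only [mem_Ico] at hj
      apply Nat.div_eq_of_lt_le
      · omega
      · have : (n + 1) * b = n * b + b := by ring
        omega
    rw [hsplit, filter_union, card_union_of_disjoint hdisj, ih, range_add_one, filter_insert]
    by_cases h : n % 2 = r
    · rw [if_pos h, card_insert_of_notMem (by simp)]
      have : (Ico (n * b) (n * b + b)).filter (fun j => j / b % 2 = r)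
          = Ico (n * b) (n * b + b) := by
        apply filter_true_of_mem
        intro j hj
        rw [hdiv j hj]
        exact h
      rw [this, Nat.card_Ico]
      ring_nf
      omega
    · rw [if_neg h]
      have : (Ico (n * b) (n * b + b)).filter (fun j => j / b % 2 = r) = ∅ := by
        apply filter_false_of_mem
        intro j hj
        rw [hdiv j hj]
        exact h
      rw [this]
      simp

lemma tp_div_block {b : ℕ} (hb : 0 < b) (q c : ℕ) (hc : c < b) : (q * b + c) / b = q := by
  rw [add_comm, Nat.add_mul_div_right _ _ hb, Nat.div_eq_of_lt hc]
  omega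

lemma tp_block_eq {b : ℕ} (hb : 0 < b) {q c q' c' : ℕ} (hc : c < b) (hc' : c' < b)
    (h : q * b + c = q' * b + c') : q = q' ∧ c = c' := by
  have h1 : q = q' := by
    have e1 := tp_div_block hb q c hc
    have e2 := tp_div_block hb q' c' hc'
    rw [h] at e1
    omega
  subst h1
  constructor
  · rfl
  · exact Nat.add_left_cancel h






def tpP (t b : ℕ) (a : Fin (3 * t) → ℕ)
    (τ : (Fin (2 * t * b) ⊕ (Σ i : Fin (3 * t), Fin (2 * a i))) → ℕ) (k : ℕ) :
    Finset (Fin (3 * t)) :=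
  univ.filter (fun i => ∃ x : Fin (2 * a i), a i ≤ (x : ℕ) ∧ τ (Sum.inr ⟨i, x⟩) ≤ (2 * k + 2) * b)

theorem tp_forward (t b : ℕ) (ht : 0 < t) (hb : 0 < b)
    (a : Fin (3 * t) → ℕ) (hpos : ∀ i, 0 < a i)
    (hsum : ∑ i, a i = t * b) (hlo : ∀ i, b < 4 * a i) (hhi : ∀ i, 2 * a i < b)
    (τ : (Fin (2 * t * b) ⊕ (Σ i : Fin (3 * t), Fin (2 * a i))) → ℕ)
    (h1 : ∀ v, 1 ≤ τ v)
    (h2 : ∀ u v, u ≠ v → tpProc t b a u = tpProc t b a v → τ u ≠ τ v)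
    (h3 : ∀ u v, tpArc t b a u v → τ u < τ v)
    (h4 : ∀ v, τ v ≤ 2 * t * b) :
    ∃ f : Fin (3 * t) → Fin t, ∀ j : Fin t,
      (Finset.univ.filter fun i => f i = j).card = 3 ∧
      ∑ i ∈ Finset.univ.filter (fun i => f i = j), a i = b := by
  -- Step A: main chain is scheduled exactly at times j+1
  have hchain : ∀ m (hm : m < 2*t*b) n (hn : n ≤ m),
      τ (Sum.inl ⟨n, by omega⟩) + (m - n) ≤ τ (Sum.inl ⟨m, hm⟩) := by
    intro m
    induction m with
    | zero =>
      intro hm n hn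
      have hn0 : n = 0 := by omega
      subst hn0
      simp
    | succ m ih =>
      intro hm n hn
      rcases Nat.eq_or_lt_of_le hn with h | h
      · subst h
        simp
      · have hm' : m < 2*t*b := by omega
        have harc : tpArc t b a (Sum.inl ⟨m, hm'⟩) (Sum.inl ⟨m+1, hm⟩) := by
          simp [tpArc]
        have hlt := h3 _ _ harc
        have hle := ih hm' n (by omega)
        omega
  have hmain : ∀ j : Fin (2*t*b), τ (Sum.inl j) = (j : ℕ) + 1 := by
    intro j
    obtain ⟨n, hn⟩ := j
    have hN : 0 < 2*t*b := by positivity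
    have hlow : τ (Sum.inl ⟨0, hN⟩) + n ≤ τ (Sum.inl ⟨n, hn⟩) := by
      have := hchain n hn 0 (Nat.zero_le _)
      simpa using this
    have hhigh : τ (Sum.inl ⟨n, hn⟩) + (2*t*b - 1 - n) ≤ τ (Sum.inl ⟨2*t*b - 1, by omega⟩) := by
      have := hchain (2*t*b - 1) (by omega) n (by omega)
      convert this using 2
    have h1' := h1 (Sum.inl ⟨0, hN⟩)
    have h4' := h4 (Sum.inl ⟨2*t*b - 1, by omega⟩)
    simp only [Fin.val_mk]
    omega
  -- counting helpers on Fin filters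
  have hcardlt : ∀ i : Fin (3*t), ((univ : Finset (Fin (2*a i))).filter (fun x : Fin (2*a i) => (x:ℕ) < a i)).card = a i := by
    intro i
    rw [Finset.card_filter, Fin.sum_univ_eq_sum_range (fun n => if n < a i then 1 else 0),
      ← Finset.card_filter]
    have : (range (2*a i)).filter (fun n => n < a i) = range (a i) := by
      ext n
      simp only [mem_filter, mem_range]
      omega
    rw [this, card_range]
  have hcardge : ∀ i : Fin (3*t), ((univ : Finset (Fin (2*a i))).filter (fun x : Fin (2*a i) => a i ≤ (x:ℕ))).card = a i := by
    intro i
    rw [Finset.card_filter, Fin.sum_univ_eq_sum_range (fun n => if a i ≤ n then 1 else 0),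
      ← Finset.card_filter]
    have : (range (2*a i)).filter (fun n => a i ≤ n) = Ico (a i) (2*a i) := by
      ext n
      simp only [mem_filter, mem_range, mem_Ico]
      omega
    rw [this, Nat.card_Ico]
    omega
  -- generic splitting of counts over the sum type
  have hsplit : ∀ (p : (Fin (2*t*b) ⊕ (Σ i : Fin (3*t), Fin (2*a i))) → Prop) [DecidablePred p],
      (univ.filter p).card
        = ((univ : Finset (Fin (2*t*b))).filter (fun j => p (Sum.inl j))).card
          + ((univ : Finset (Σ i : Fin (3*t), Fin (2*a i))).filter (fun q => p (Sum.inr q))).card := by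
    intro p _
    simp only [Finset.card_filter]
    rw [Fintype.sum_sum_type]
  have hFinRange : ∀ (n : ℕ) (p : ℕ → Prop) [DecidablePred p],
      ((univ : Finset (Fin n)).filter (fun j : Fin n => p (j:ℕ))).card = ((range n).filter p).card := by
    intro n p _
    rw [Finset.card_filter, Fin.sum_univ_eq_sum_range (fun j => if p j then 1 else 0),
      ← Finset.card_filter]
  have hSigma : ∀ (p : (Σ i : Fin (3*t), Fin (2*a i)) → Prop) [DecidablePred p],
      ((univ : Finset (Σ i : Fin (3*t), Fin (2*a i))).filter p).card
        = ∑ i, ((univ : Finset (Fin (2*a i))).filter (fun x : Fin (2*a i) => p ⟨i,x⟩)).card := by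
    intro p _
    rw [Finset.card_filter, ← Finset.univ_sigma_univ, Finset.sum_sigma]
    refine Finset.sum_congr rfl fun i _ => ?_
    rw [Finset.card_filter]
  -- processor cardinalities
  have hproc2main : ((univ : Finset (Fin (2*t*b))).filter (fun j => tpProc t b a (Sum.inl j) = 2))
      = (univ.filter (fun j : Fin (2*t*b) => ((j:ℕ)/b % 2 = 1))) := by
    ext j
    simp only [mem_filter, mem_univ, true_and, tpProc]
    rcases Nat.mod_two_eq_zero_or_one ((j:ℕ)/b) with h | h <;> simp [h]
  have hproc1main : ((univ : Finset (Fin (2*t*b))).filter (fun j => tpProc t b a (Sum.inl j) = 1))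
      = (univ.filter (fun j : Fin (2*t*b) => ((j:ℕ)/b % 2 = 0))) := by
    ext j
    simp only [mem_filter, mem_univ, true_and, tpProc]
    rcases Nat.mod_two_eq_zero_or_one ((j:ℕ)/b) with h | h <;> simp [h]
  have hproc2small : ∀ (i : Fin (3*t)) (x : Fin (2*a i)),
      tpProc t b a (Sum.inr ⟨i,x⟩) = 2 ↔ (x:ℕ) < a i := by
    intro i x
    simp only [tpProc]
    by_cases h : (x:ℕ) < a i <;> simp [h]
  have hproc1small : ∀ (i : Fin (3*t)) (x : Fin (2*a i)),
      tpProc t b a (Sum.inr ⟨i,x⟩) = 1 ↔ a i ≤ (x:ℕ) := by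
    intro i x
    simp only [tpProc]
    by_cases h : (x:ℕ) < a i <;> simp [h] <;> omega
  have hblockcard : ∀ (n r : ℕ), r < 2 →
      ((range (n*b)).filter (fun j => j / b % 2 = r)).card = ((n + 1 - r)/2) * b := by
    intro n r hr
    rw [tp_block_count b r n hb, tp_parity_count' r n hr]
  have hproc2card : (univ.filter (fun v => tpProc t b a v = 2)).card = 2*t*b := by
    rw [hsplit, hproc2main, hFinRange (2*t*b) (fun n => n / b % 2 = 1)]
    have e1 : ((range (2*t*b)).filter (fun j => j / b % 2 = 1)).card = t * b := by
      rw [hblockcard (2*t) 1 (by omega)]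
      have : (2*t+1-1)/2 = t := by omega
      rw [this]
    have e2 : ((univ : Finset (Σ i : Fin (3*t), Fin (2*a i))).filter
        (fun q => tpProc t b a (Sum.inr q) = 2)).card = t*b := by
      rw [hSigma]
      rw [← hsum]
      refine Finset.sum_congr rfl fun i _ => ?_
      have heq : (univ.filter (fun x : Fin (2*a i) => tpProc t b a (Sum.inr ⟨i,x⟩) = 2))
          = univ.filter (fun x : Fin (2*a i) => (x:ℕ) < a i) := by
        ext x
        simp only [mem_filter, mem_univ, true_and]
        exact hproc2small i x
      rw [heq]
      exact hcardlt i
    rw [e1, e2]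
    ring
  have hproc1card : (univ.filter (fun v => tpProc t b a v = 1)).card = 2*t*b := by
    rw [hsplit, hproc1main, hFinRange (2*t*b) (fun n => n / b % 2 = 0)]
    have e1 : ((range (2*t*b)).filter (fun j => j / b % 2 = 0)).card = t * b := by
      rw [hblockcard (2*t) 0 (by omega)]
      have : (2*t+1-0)/2 = t := by omega
      rw [this]
    have e2 : ((univ : Finset (Σ i : Fin (3*t), Fin (2*a i))).filter
        (fun q => tpProc t b a (Sum.inr q) = 1)).card = t*b := by
      rw [hSigma]
      rw [← hsum]
      refine Finset.sum_congr rfl fun i _ => ?_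
      have heq : (univ.filter (fun x : Fin (2*a i) => tpProc t b a (Sum.inr ⟨i,x⟩) = 1))
          = univ.filter (fun x : Fin (2*a i) => a i ≤ (x:ℕ)) := by
        ext x
        simp only [mem_filter, mem_univ, true_and]
        exact hproc1small i x
      rw [heq]
      exact hcardge i
    rw [e1, e2]
    ring
  have hproc2mainIff : ∀ j : Fin (2*t*b), tpProc t b a (Sum.inl j) = 2 ↔ (j:ℕ)/b % 2 = 1 := by
    intro j
    simp only [tpProc]
    rcases Nat.mod_two_eq_zero_or_one ((j:ℕ)/b) with h | h <;> simp [h]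
  have hproc1mainIff : ∀ j : Fin (2*t*b), tpProc t b a (Sum.inl j) = 1 ↔ (j:ℕ)/b % 2 = 0 := by
    intro j
    simp only [tpProc]
    rcases Nat.mod_two_eq_zero_or_one ((j:ℕ)/b) with h | h <;> simp [h]
  -- τ is injective on each processor class and bijects it onto Icc 1 (2tb)
  have hinjOn : ∀ c : ℕ, Set.InjOn τ (univ.filter (fun v => tpProc t b a v = c)) := by
    intro c u hu v hv huv
    by_contra hne
    simp only [coe_filter, Set.mem_setOf_eq, mem_univ, true_and] at hu hv
    exact h2 u v hne (hu.trans hv.symm) huv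
  have himg : ∀ c : ℕ, (univ.filter (fun v => tpProc t b a v = c)).card = 2*t*b →
      (univ.filter (fun v => tpProc t b a v = c)).image τ = Finset.Icc 1 (2*t*b) := by
    intro c hc
    apply Finset.eq_of_subset_of_card_le
    · intro s hs
      simp only [mem_image] at hs
      obtain ⟨v, _, rfl⟩ := hs
      simp only [mem_Icc]
      exact ⟨h1 v, h4 v⟩
    · rw [Finset.card_image_of_injOn (hinjOn c), hc, Nat.card_Icc]
      omega
  have hcnt : ∀ c : ℕ, (univ.filter (fun v => tpProc t b a v = c)).card = 2*t*b →
      ∀ m, m ≤ 2*t*b → (univ.filter (fun v => tpProc t b a v = c ∧ τ v ≤ m)).card = m := by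
    intro c hc m hm
    have hsub : univ.filter (fun v => tpProc t b a v = c ∧ τ v ≤ m)
        = (univ.filter (fun v => tpProc t b a v = c)).filter (fun v => τ v ≤ m) := by
      rw [filter_filter]
    rw [hsub]
    have hinj2 : Set.InjOn τ
        ((univ.filter (fun v => tpProc t b a v = c)).filter (fun v => τ v ≤ m)) :=
      (hinjOn c).mono (Finset.coe_subset.mpr (filter_subset _ _))
    rw [← Finset.card_image_of_injOn hinj2]
    have himgf : (((univ.filter (fun v => tpProc t b a v = c)).filter (fun v => τ v ≤ m)).image τ)
        = ((univ.filter (fun v => tpProc t b a v = c)).image τ).filter (fun s => s ≤ m) := by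
      ext s
      simp only [mem_image, mem_filter]
      constructor
      · rintro ⟨v, hv, rfl⟩
        exact ⟨⟨v, hv.1, rfl⟩, hv.2⟩
      · rintro ⟨⟨v, hvS, rfl⟩, hm'⟩
        exact ⟨v, ⟨hvS, hm'⟩, rfl⟩
    rw [himgf, himg c hc]
    have : (Finset.Icc 1 (2*t*b)).filter (fun s => s ≤ m) = Finset.Icc 1 m := by
      ext s
      simp only [mem_filter, mem_Icc]
      omega
    rw [this, Nat.card_Icc]
    omega
  -- counts of small nodes that must be finished by the end of each block
  have hsmall2 : ∀ k, k < t →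
      ((univ : Finset (Σ i : Fin (3*t), Fin (2*a i))).filter
        (fun q => (q.2:ℕ) < a q.1 ∧ τ (Sum.inr q) ≤ (2*k+1)*b)).card = (k+1)*b := by
    intro k hk
    have hm : (2*k+1)*b ≤ 2*t*b := by
      have : (2*k+1) * b ≤ (2*t) * b := Nat.mul_le_mul_right b (by omega)
      omega
    have htot := hcnt 2 hproc2card ((2*k+1)*b) hm
    rw [hsplit] at htot
    have hsig : ((univ : Finset (Σ i : Fin (3*t), Fin (2*a i))).filter
          (fun q => tpProc t b a (Sum.inr q) = 2 ∧ τ (Sum.inr q) ≤ (2*k+1)*b))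
        = ((univ : Finset (Σ i : Fin (3*t), Fin (2*a i))).filter
          (fun q => (q.2:ℕ) < a q.1 ∧ τ (Sum.inr q) ≤ (2*k+1)*b)) := by
      ext ⟨i, x⟩
      simp only [mem_filter, mem_univ, true_and, hproc2small i x]
    rw [hsig] at htot
    have hmainpart : ((univ : Finset (Fin (2*t*b))).filter
        (fun j => tpProc t b a (Sum.inl j) = 2 ∧ τ (Sum.inl j) ≤ (2*k+1)*b)).card = k * b := by
      have heq : ((univ : Finset (Fin (2*t*b))).filter
          (fun j => tpProc t b a (Sum.inl j) = 2 ∧ τ (Sum.inl j) ≤ (2*k+1)*b))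
          = (univ.filter (fun j : Fin (2*t*b) => ((j:ℕ) < (2*k+1)*b ∧ (j:ℕ)/b % 2 = 1))) := by
        ext j
        simp only [mem_filter, mem_univ, true_and, hmain j, hproc2mainIff j]
        constructor
        · rintro ⟨hp, hle⟩
          exact ⟨by omega, hp⟩
        · rintro ⟨hlt, hp⟩
          exact ⟨hp, by omega⟩
      rw [heq, hFinRange (2*t*b) (fun n => n < (2*k+1)*b ∧ n/b % 2 = 1)]
      have hran : (range (2*t*b)).filter (fun n => n < (2*k+1)*b ∧ n/b%2=1)
          = (range ((2*k+1)*b)).filter (fun n => n/b%2=1) := by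
        ext n
        simp only [mem_filter, mem_range]
        constructor
        · rintro ⟨_, hlt, hp⟩
          exact ⟨hlt, hp⟩
        · rintro ⟨hlt, hp⟩
          exact ⟨by omega, hlt, hp⟩
      rw [hran, hblockcard (2*k+1) 1 (by omega)]
      have : (2*k+1+1-1)/2 = k := by omega
      rw [this]
    have hr : (2*k+1)*b = k*b + (k+1)*b := by ring
    omega
  have hsmall1 : ∀ k, k < t →
      ((univ : Finset (Σ i : Fin (3*t), Fin (2*a i))).filter
        (fun q => a q.1 ≤ (q.2:ℕ) ∧ τ (Sum.inr q) ≤ (2*k+2)*b)).card = (k+1)*b := by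
    intro k hk
    have hm : (2*k+2)*b ≤ 2*t*b := by
      have : (2*k+2) * b ≤ (2*t) * b := Nat.mul_le_mul_right b (by omega)
      omega
    have htot := hcnt 1 hproc1card ((2*k+2)*b) hm
    rw [hsplit] at htot
    have hsig : ((univ : Finset (Σ i : Fin (3*t), Fin (2*a i))).filter
          (fun q => tpProc t b a (Sum.inr q) = 1 ∧ τ (Sum.inr q) ≤ (2*k+2)*b))
        = ((univ : Finset (Σ i : Fin (3*t), Fin (2*a i))).filter
          (fun q => a q.1 ≤ (q.2:ℕ) ∧ τ (Sum.inr q) ≤ (2*k+2)*b)) := by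
      ext ⟨i, x⟩
      simp only [mem_filter, mem_univ, true_and, hproc1small i x]
    rw [hsig] at htot
    have hmainpart : ((univ : Finset (Fin (2*t*b))).filter
        (fun j => tpProc t b a (Sum.inl j) = 1 ∧ τ (Sum.inl j) ≤ (2*k+2)*b)).card = (k+1) * b := by
      have heq : ((univ : Finset (Fin (2*t*b))).filter
          (fun j => tpProc t b a (Sum.inl j) = 1 ∧ τ (Sum.inl j) ≤ (2*k+2)*b))
          = (univ.filter (fun j : Fin (2*t*b) => ((j:ℕ) < (2*k+2)*b ∧ (j:ℕ)/b % 2 = 0))) := by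
        ext j
        simp only [mem_filter, mem_univ, true_and, hmain j, hproc1mainIff j]
        constructor
        · rintro ⟨hp, hle⟩
          exact ⟨by omega, hp⟩
        · rintro ⟨hlt, hp⟩
          exact ⟨hp, by omega⟩
      rw [heq, hFinRange (2*t*b) (fun n => n < (2*k+2)*b ∧ n/b % 2 = 0)]
      have hran : (range (2*t*b)).filter (fun n => n < (2*k+2)*b ∧ n/b%2=0)
          = (range ((2*k+2)*b)).filter (fun n => n/b%2=0) := by
        ext n
        simp only [mem_filter, mem_range]
        constructor
        · rintro ⟨_, hlt, hp⟩
          exact ⟨hlt, hp⟩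
        · rintro ⟨hlt, hp⟩
          exact ⟨by omega, hlt, hp⟩
      rw [hran, hblockcard (2*k+2) 0 (by omega)]
      have : (2*k+2+1-0)/2 = k+1 := by omega
      rw [this]
    have hr : (2*k+2)*b = (k+1)*b + (k+1)*b := by ring
    omega
  -- chains of small jobs
  have hchainS : ∀ (i : Fin (3*t)) (m : ℕ) (hm : m < 2*a i) (n : ℕ) (hn : n ≤ m),
      τ (Sum.inr ⟨i, ⟨n, by omega⟩⟩) + (m - n) ≤ τ (Sum.inr ⟨i, ⟨m, hm⟩⟩) := by
    intro i m
    induction m with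
    | zero =>
      intro hm n hn
      have hn0 : n = 0 := by omega
      subst hn0
      simp
    | succ m ih =>
      intro hm n hn
      rcases Nat.eq_or_lt_of_le hn with h | h
      · subst h
        simp
      · have hm' : m < 2*a i := by omega
        have harc : tpArc t b a (Sum.inr ⟨i, ⟨m, hm'⟩⟩) (Sum.inr ⟨i, ⟨m+1, hm⟩⟩) := by
          simp [tpArc]
        have hlt := h3 _ _ harc
        have hle := ih hm' n (by omega)
        omega
  -- key step: proc-2 parts of started chains are all done within the earlier blocks
  have hkey : ∀ k, k < t → ∀ i ∈ tpP t b a τ k, ∀ x : Fin (2*a i), (x:ℕ) < a i →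
      τ (Sum.inr ⟨i, x⟩) ≤ (2*k+1)*b := by
    intro k hk i hi x hx
    rw [tpP, mem_filter] at hi
    obtain ⟨-, x₀, hx₀, hτ₀⟩ := hi
    have hlt : τ (Sum.inr ⟨i, x⟩) + 1 ≤ τ (Sum.inr ⟨i, x₀⟩) := by
      have hh := hchainS i (x₀:ℕ) x₀.isLt (x:ℕ) (by omega)
      simp only [Fin.eta] at hh
      omega
    by_contra hgt
    push_neg at hgt
    set s := τ (Sum.inr ⟨i, x⟩) with hs
    have hr2 : (2*k+2)*b = (2*k+1)*b + b := by ring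
    have hs2 : s < (2*k+2)*b := by omega
    have h2tb : (2*k+2)*b ≤ 2*t*b := by
      have : (2*k+2)*b ≤ (2*t)*b := Nat.mul_le_mul_right b (by omega)
      omega
    have hjlt : s - 1 < 2*t*b := by omega
    have hτj := hmain ⟨s-1, hjlt⟩
    simp only [Fin.val_mk] at hτj
    have hclt : s - 1 - (2*k+1)*b < b := by omega
    have hcr : s - 1 = (2*k+1)*b + (s - 1 - (2*k+1)*b) := by omega
    have hdiv : (s-1)/b = 2*k+1 := by
      rw [hcr]
      exact tp_div_block hb _ _ hclt
    have hproc : tpProc t b a (Sum.inl ⟨s-1, hjlt⟩) = 2 := by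
      rw [hproc2mainIff]
      simp only [Fin.val_mk]
      rw [hdiv]
      omega
    have hne : (Sum.inl ⟨s-1, hjlt⟩ : Fin (2*t*b) ⊕ (Σ i : Fin (3*t), Fin (2*a i)))
        ≠ Sum.inr ⟨i, x⟩ := by simp
    have hpp : tpProc t b a (Sum.inl ⟨s-1, hjlt⟩) = tpProc t b a (Sum.inr ⟨i, x⟩) :=
      hproc.trans ((hproc2small i x).mpr hx).symm
    exact h2 _ _ hne hpp (by omega)
  -- the groups have total size exactly (k+1)·b
  have hsumP : ∀ k, k < t → ∑ i ∈ tpP t b a τ k, a i = (k+1)*b := by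
    intro k hk
    apply le_antisymm
    · have hsig : ((tpP t b a τ k).sigma
          (fun i => (univ : Finset (Fin (2*a i))).filter (fun x : Fin (2*a i) => (x:ℕ) < a i)))
          ⊆ (univ.filter (fun q : Σ i : Fin (3*t), Fin (2*a i) =>
              (q.2:ℕ) < a q.1 ∧ τ (Sum.inr q) ≤ (2*k+1)*b)) := by
        rintro ⟨i, x⟩ hq
        rw [Finset.mem_sigma] at hq
        obtain ⟨hi, hx⟩ := hq
        rw [mem_filter] at hx ⊢
        exact ⟨mem_univ _, hx.2, hkey k hk i hi x hx.2⟩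
      have hcards := Finset.card_le_card hsig
      rw [Finset.card_sigma, hsmall2 k hk] at hcards
      calc ∑ i ∈ tpP t b a τ k, a i
          = ∑ i ∈ tpP t b a τ k,
              ((univ : Finset (Fin (2*a i))).filter (fun x : Fin (2*a i) => (x:ℕ) < a i)).card :=
            Finset.sum_congr rfl fun i _ => (hcardlt i).symm
        _ ≤ (k+1)*b := hcards
    · have hsig : (univ.filter (fun q : Σ i : Fin (3*t), Fin (2*a i) =>
            a q.1 ≤ (q.2:ℕ) ∧ τ (Sum.inr q) ≤ (2*k+2)*b))
          ⊆ ((tpP t b a τ k).sigma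
            (fun i => (univ : Finset (Fin (2*a i))).filter (fun x : Fin (2*a i) => a i ≤ (x:ℕ)))) := by
        rintro ⟨i, x⟩ hq
        rw [mem_filter] at hq
        rw [Finset.mem_sigma]
        refine ⟨?_, mem_filter.mpr ⟨mem_univ _, hq.2.1⟩⟩
        rw [tpP, mem_filter]
        exact ⟨mem_univ _, x, hq.2.1, hq.2.2⟩
      have hcards := Finset.card_le_card hsig
      rw [Finset.card_sigma, hsmall1 k hk] at hcards
      calc (k+1)*b
          ≤ ∑ i ∈ tpP t b a τ k,
              ((univ : Finset (Fin (2*a i))).filter (fun x : Fin (2*a i) => a i ≤ (x:ℕ))).card :=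
            hcards
        _ = ∑ i ∈ tpP t b a τ k, a i := Finset.sum_congr rfl fun i _ => hcardge i
  have hPmono : ∀ k l, k ≤ l → tpP t b a τ k ⊆ tpP t b a τ l := by
    intro k l hkl
    intro i hi
    simp only [tpP, mem_filter] at hi ⊢
    obtain ⟨hu, x, hx, hτ⟩ := hi
    exact ⟨hu, x, hx, hτ.trans (Nat.mul_le_mul_right b (by omega))⟩
  have hPtop : tpP t b a τ (t-1) = univ := by
    rw [Finset.eq_univ_iff_forall]
    intro i
    by_contra hi
    have hsub : tpP t b a τ (t-1) ⊆ univ.erase i := by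
      intro j hj
      rw [mem_erase]
      exact ⟨fun h => hi (h ▸ hj), mem_univ _⟩
    have hle := Finset.sum_le_sum_of_subset (f := a) hsub
    have hsumP' := hsumP (t-1) (by omega)
    have he : ((t-1)+1)*b = t*b := by
      have h' : t - 1 + 1 = t := by omega
      rw [h']
    have herase : ∑ j ∈ univ.erase i, a j + a i = ∑ j, a j :=
      Finset.sum_erase_add _ _ (mem_univ i)
    have := hpos i
    omega
  -- the triple-size lemma
  have hcard3 : ∀ s : Finset (Fin (3*t)), ∑ i ∈ s, a i = b → s.card = 3 := by
    intro s hs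
    have hne : s.Nonempty := by
      rcases Finset.eq_empty_or_nonempty s with h | h
      · rw [h] at hs
        simp at hs
        omega
      · exact h
    have hup : ∑ _i ∈ s, b < ∑ i ∈ s, 4 * a i :=
      Finset.sum_lt_sum_of_nonempty hne (fun i _ => hlo i)
    have hdn : ∑ i ∈ s, 2 * a i < ∑ _i ∈ s, b :=
      Finset.sum_lt_sum_of_nonempty hne (fun i _ => hhi i)
    rw [Finset.sum_const, smul_eq_mul, ← Finset.mul_sum, hs] at hup
    rw [Finset.sum_const, smul_eq_mul, ← Finset.mul_sum, hs] at hdn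
    have h1' : s.card < 4 := by
      by_contra h
      push_neg at h
      have : 4*b ≤ s.card * b := Nat.mul_le_mul_right b h
      omega
    have h2' : 2 < s.card := by
      by_contra h
      push_neg at h
      have : s.card * b ≤ 2*b := Nat.mul_le_mul_right b h
      omega
    omega
  -- define the partition
  have hex : ∀ i, ∃ k, i ∈ tpP t b a τ k := by
    intro i
    exact ⟨t-1, by rw [hPtop]; exact mem_univ i⟩
  have hflt : ∀ i, Nat.find (hex i) < t := by
    intro i
    have := Nat.find_min' (hex i) (show i ∈ tpP t b a τ (t-1) from by rw [hPtop]; exact mem_univ i)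
    omega
  refine ⟨fun i => ⟨Nat.find (hex i), hflt i⟩, fun j => ?_⟩
  obtain ⟨q, hqlt⟩ := j
  cases q with
  | zero =>
    have hfeq : (univ.filter (fun i => (⟨Nat.find (hex i), hflt i⟩ : Fin t) = ⟨0, hqlt⟩))
        = tpP t b a τ 0 := by
      ext i
      simp only [mem_filter, mem_univ, true_and, Fin.mk.injEq]
      constructor
      · intro h
        have hspec := Nat.find_spec (hex i)
        rw [h] at hspec
        exact hspec
      · intro h
        have := Nat.find_min' (hex i) h
        omega
    have hsq : ∑ i ∈ (univ.filter (fun i => (⟨Nat.find (hex i), hflt i⟩ : Fin t) = ⟨0, hqlt⟩)), a i = b := by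
      rw [hfeq]
      have := hsumP 0 ht
      simpa using this
    exact ⟨hcard3 _ hsq, hsq⟩
  | succ m =>
    have hfeq : (univ.filter (fun i => (⟨Nat.find (hex i), hflt i⟩ : Fin t) = ⟨m+1, hqlt⟩))
        = tpP t b a τ (m+1) \ tpP t b a τ m := by
      ext i
      simp only [mem_filter, mem_univ, true_and, Fin.mk.injEq, mem_sdiff]
      constructor
      · intro h
        have hspec := Nat.find_spec (hex i)
        rw [h] at hspec
        refine ⟨hspec, fun hm' => ?_⟩
        have := Nat.find_min' (hex i) hm'
        omega
      · rintro ⟨hin, hout⟩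
        have hle := Nat.find_min' (hex i) hin
        rcases Nat.eq_or_lt_of_le hle with h | h
        · exact h
        · exfalso
          have hmem := Nat.find_spec (hex i)
          exact hout (hPmono _ m (by omega) hmem)
    have hsq : ∑ i ∈ (univ.filter (fun i => (⟨Nat.find (hex i), hflt i⟩ : Fin t) = ⟨m+1, hqlt⟩)), a i = b := by
      rw [hfeq]
      have hsub := hPmono m (m+1) (by omega)
      have hsd := Finset.sum_sdiff (f := a) hsub
      have hs1 := hsumP m (by omega)
      have hs2 := hsumP (m+1) hqlt
      have hr : ((m+1)+1)*b = (m+1)*b + b := by ring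
      omega
    exact ⟨hcard3 _ hsq, hsq⟩

theorem tp_backward (t b : ℕ) (ht : 0 < t) (hb : 0 < b)
    (a : Fin (3 * t) → ℕ) (hpos : ∀ i, 0 < a i)
    (hlo : ∀ i, b < 4 * a i) (hhi : ∀ i, 2 * a i < b)
    (f : Fin (3 * t) → Fin t)
    (hf : ∀ j : Fin t, (Finset.univ.filter fun i => f i = j).card = 3 ∧
      ∑ i ∈ Finset.univ.filter (fun i => f i = j), a i = b) :
    ∃ τ : (Fin (2 * t * b) ⊕ (Σ i : Fin (3 * t), Fin (2 * a i))) → ℕ,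
      (∀ v, 1 ≤ τ v) ∧
      (∀ u v, u ≠ v → tpProc t b a u = tpProc t b a v → τ u ≠ τ v) ∧
      (∀ u v, tpArc t b a u v → τ u < τ v) ∧
      (∀ v, τ v ≤ 2 * t * b) := by
  set o : Fin (3*t) → ℕ :=
    fun i => ∑ k ∈ univ.filter (fun k => f k = f i ∧ (k:ℕ) < (i:ℕ)), a k with ho
  have houb : ∀ i, o i + a i ≤ b := by
    intro i
    have hnm : i ∉ univ.filter (fun k => f k = f i ∧ (k:ℕ) < (i:ℕ)) := by
      simp
    have hins : insert i (univ.filter (fun k => f k = f i ∧ (k:ℕ) < (i:ℕ)))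
        ⊆ univ.filter (fun k => f k = f i) := by
      intro k hk
      rcases Finset.mem_insert.mp hk with h | h
      · subst h
        simp
      · rw [mem_filter] at h ⊢
        exact ⟨h.1, h.2.1⟩
    have hle := Finset.sum_le_sum_of_subset (f := a) hins
    rw [Finset.sum_insert hnm] at hle
    rw [(hf (f i)).2] at hle
    have hoi : o i = ∑ k ∈ univ.filter (fun k => f k = f i ∧ (k:ℕ) < (i:ℕ)), a k := rfl
    omega
  have hdisj : ∀ i i', f i = f i' → (i:ℕ) < (i':ℕ) → o i + a i ≤ o i' := by
    intro i i' hff hii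
    have hnm : i ∉ univ.filter (fun k => f k = f i ∧ (k:ℕ) < (i:ℕ)) := by
      simp
    have hins : insert i (univ.filter (fun k => f k = f i ∧ (k:ℕ) < (i:ℕ)))
        ⊆ univ.filter (fun k => f k = f i' ∧ (k:ℕ) < (i':ℕ)) := by
      intro k hk
      rcases Finset.mem_insert.mp hk with h | h
      · subst h
        rw [mem_filter]
        exact ⟨mem_univ _, hff, hii⟩
      · rw [mem_filter] at h ⊢
        exact ⟨h.1, h.2.1.trans hff, by omega⟩
    have hle := Finset.sum_le_sum_of_subset (f := a) hins
    rw [Finset.sum_insert hnm] at hle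
    have hoi : o i = ∑ k ∈ univ.filter (fun k => f k = f i ∧ (k:ℕ) < (i:ℕ)), a k := rfl
    have hoi' : o i' = ∑ k ∈ univ.filter (fun k => f k = f i' ∧ (k:ℕ) < (i':ℕ)), a k := rfl
    omega
  refine ⟨fun v => match v with
    | Sum.inl j => (j:ℕ) + 1
    | Sum.inr ⟨i, x⟩ => if (x:ℕ) < a i then 2*(f i : ℕ)*b + (o i + (x:ℕ)) + 1
        else (2*(f i : ℕ)+1)*b + (o i + ((x:ℕ) - a i)) + 1, ?_, ?_, ?_, ?_⟩
  · -- τ ≥ 1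
    intro v
    rcases v with j | ⟨i, x⟩
    · dsimp only
      omega
    · dsimp only
      split_ifs <;> omega
  · -- injectivity on each processor
    intro u v hne hproc
    have hmainproc : ∀ j : Fin (2*t*b), tpProc t b a (Sum.inl j) = 2 ↔ (j:ℕ)/b % 2 = 1 := by
      intro j
      simp only [tpProc]
      rcases Nat.mod_two_eq_zero_or_one ((j:ℕ)/b) with h | h <;> simp [h]
    have hmainproc1 : ∀ j : Fin (2*t*b), tpProc t b a (Sum.inl j) = 1 ↔ (j:ℕ)/b % 2 = 0 := by
      intro j
      simp only [tpProc]
      rcases Nat.mod_two_eq_zero_or_one ((j:ℕ)/b) with h | h <;> simp [h]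
    rcases u with j | ⟨i, x⟩ <;> rcases v with j' | ⟨i', x'⟩
    · dsimp only
      intro heq
      exact hne (congrArg Sum.inl (Fin.ext (by omega)))
    · dsimp only
      intro heq
      by_cases hx : (x':ℕ) < a i'
      · rw [if_pos hx] at heq
        have hp2 : tpProc t b a (Sum.inr ⟨i', x'⟩) = 2 := by
          simp only [tpProc]
          rw [if_pos hx]
        have hj : (j:ℕ)/b % 2 = 1 := (hmainproc j).mp (hproc.trans hp2)
        have hcb : o i' + (x':ℕ) < b := by
          have := houb i'
          omega
        have hjv : (j:ℕ) = 2*(f i' : ℕ)*b + (o i' + (x':ℕ)) := by omega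
        have hdiv : (j:ℕ)/b = 2*(f i' : ℕ) := by
          rw [hjv]
          exact tp_div_block hb _ _ hcb
        omega
      · rw [if_neg hx] at heq
        have hp1 : tpProc t b a (Sum.inr ⟨i', x'⟩) = 1 := by
          simp only [tpProc]
          rw [if_neg hx]
        have hj : (j:ℕ)/b % 2 = 0 := (hmainproc1 j).mp (hproc.trans hp1)
        have hcb : o i' + ((x':ℕ) - a i') < b := by
          have h1 := houb i'
          have h2 := x'.isLt
          omega
        have hjv : (j:ℕ) = (2*(f i' : ℕ)+1)*b + (o i' + ((x':ℕ) - a i')) := by omega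
        have hdiv : (j:ℕ)/b = 2*(f i' : ℕ)+1 := by
          rw [hjv]
          exact tp_div_block hb _ _ hcb
        omega
    · dsimp only
      intro heq
      by_cases hx : (x:ℕ) < a i
      · rw [if_pos hx] at heq
        have hp2 : tpProc t b a (Sum.inr ⟨i, x⟩) = 2 := by
          simp only [tpProc]
          rw [if_pos hx]
        have hj : (j':ℕ)/b % 2 = 1 := (hmainproc j').mp (hproc.symm.trans hp2)
        have hcb : o i + (x:ℕ) < b := by
          have := houb i
          omega
        have hjv : (j':ℕ) = 2*(f i : ℕ)*b + (o i + (x:ℕ)) := by omega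
        have hdiv : (j':ℕ)/b = 2*(f i : ℕ) := by
          rw [hjv]
          exact tp_div_block hb _ _ hcb
        omega
      · rw [if_neg hx] at heq
        have hp1 : tpProc t b a (Sum.inr ⟨i, x⟩) = 1 := by
          simp only [tpProc]
          rw [if_neg hx]
        have hj : (j':ℕ)/b % 2 = 0 := (hmainproc1 j').mp (hproc.symm.trans hp1)
        have hcb : o i + ((x:ℕ) - a i) < b := by
          have h1 := houb i
          have h2 := x.isLt
          omega
        have hjv : (j':ℕ) = (2*(f i : ℕ)+1)*b + (o i + ((x:ℕ) - a i)) := by omega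
        have hdiv : (j':ℕ)/b = 2*(f i : ℕ)+1 := by
          rw [hjv]
          exact tp_div_block hb _ _ hcb
        omega
    · dsimp only
      intro heq
      by_cases hx : (x:ℕ) < a i <;> by_cases hx' : (x':ℕ) < a i'
      · rw [if_pos hx, if_pos hx'] at heq
        have hcb : o i + (x:ℕ) < b := by
          have := houb i
          omega
        have hcb' : o i' + (x':ℕ) < b := by
          have := houb i'
          omega
        obtain ⟨hF, hc⟩ := tp_block_eq hb hcb hcb' (by omega :
          (2*(f i : ℕ))*b + (o i + (x:ℕ)) = (2*(f i' : ℕ))*b + (o i' + (x':ℕ)))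
        have hff : f i = f i' := Fin.ext (by omega)
        rcases lt_trichotomy (i:ℕ) (i':ℕ) with hii | hii | hii
        · have := hdisj i i' hff hii
          omega
        · have hieq : i = i' := Fin.ext hii
          subst hieq
          exact hne (by rw [show x = x' from Fin.ext (by omega)])
        · have := hdisj i' i hff.symm hii
          omega
      · exfalso
        have e1 : tpProc t b a (Sum.inr ⟨i, x⟩) = 2 := by
          simp only [tpProc]
          rw [if_pos hx]
        have e2 : tpProc t b a (Sum.inr ⟨i', x'⟩) = 1 := by
          simp only [tpProc]
          rw [if_neg hx']
        rw [e1, e2] at hproc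
        omega
      · exfalso
        have e1 : tpProc t b a (Sum.inr ⟨i, x⟩) = 1 := by
          simp only [tpProc]
          rw [if_neg hx]
        have e2 : tpProc t b a (Sum.inr ⟨i', x'⟩) = 2 := by
          simp only [tpProc]
          rw [if_pos hx']
        rw [e1, e2] at hproc
        omega
      · rw [if_neg hx, if_neg hx'] at heq
        have hcb : o i + ((x:ℕ) - a i) < b := by
          have h1 := houb i
          have h2 := x.isLt
          omega
        have hcb' : o i' + ((x':ℕ) - a i') < b := by
          have h1 := houb i'
          have h2 := x'.isLt
          omega
        obtain ⟨hF, hc⟩ := tp_block_eq hb hcb hcb' (by omega :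
          (2*(f i : ℕ)+1)*b + (o i + ((x:ℕ) - a i))
            = (2*(f i' : ℕ)+1)*b + (o i' + ((x':ℕ) - a i')))
        have hff : f i = f i' := Fin.ext (by omega)
        rcases lt_trichotomy (i:ℕ) (i':ℕ) with hii | hii | hii
        · have h5 := hdisj i i' hff hii
          have h6 := x.isLt
          omega
        · have hieq : i = i' := Fin.ext hii
          subst hieq
          exact hne (by rw [show x = x' from Fin.ext (by omega)])
        · have h5 := hdisj i' i hff.symm hii
          have h6 := x'.isLt
          omega
  · -- arcs increase
    intro u v harc
    rcases u with j | ⟨i, x⟩ <;> rcases v with j' | ⟨i', x'⟩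
    · have hj : (j':ℕ) = (j:ℕ) + 1 := harc
      dsimp only
      omega
    · cases harc
    · cases harc
    · obtain ⟨hii, hxx⟩ := harc
      have hieq : i = i' := Fin.ext hii
      subst hieq
      dsimp only
      have hr : (2*(f i : ℕ)+1)*b = 2*(f i : ℕ)*b + b := by ring
      have hab := hhi i
      split_ifs with h1 h2 h3 <;> omega
  · -- bound
    intro v
    rcases v with j | ⟨i, x⟩
    · dsimp only
      have := j.isLt
      omega
    · dsimp only
      have hflt : (f i : ℕ) < t := (f i).isLt
      have hub := houb i
      have hxl := x.isLt
      have hmul : (2*(f i : ℕ)+2)*b ≤ 2*t*b := by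
        have h' : (2*(f i : ℕ)+2) ≤ 2*t := by omega
        exact Nat.mul_le_mul_right b h'
      have hr1 : (2*(f i : ℕ)+2)*b = 2*(f i : ℕ)*b + b + b := by ring
      have hr2 : (2*(f i : ℕ)+1)*b = 2*(f i : ℕ)*b + b := by ring
      split_ifs with hx <;> omega


/-- **Correctness of the 3-partition scheduling reduction.**  For positive `t`, `b` and
positive integers `a 0, …, a (3t-1)` with `∑ a i = t·b` and `b/4 < a i < b/2`, the above
DAG admits a schedule respecting the fixed processor assignment with makespan `2·t·b`
iff the multiset `{a i}` can be partitioned into `t` triples each summing to `b`. -/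
theorem three_partition_scheduling (t b : ℕ) (ht : 0 < t) (hb : 0 < b)
    (a : Fin (3 * t) → ℕ) (hpos : ∀ i, 0 < a i)
    (hsum : ∑ i, a i = t * b) (hlo : ∀ i, b < 4 * a i) (hhi : ∀ i, 2 * a i < b) :
    (∃ τ : (Fin (2 * t * b) ⊕ (Σ i : Fin (3 * t), Fin (2 * a i))) → ℕ,
      (∀ v, 1 ≤ τ v) ∧
      (∀ u v, u ≠ v → tpProc t b a u = tpProc t b a v → τ u ≠ τ v) ∧
      (∀ u v, tpArc t b a u v → τ u < τ v) ∧
      (∀ v, τ v ≤ 2 * t * b)) ↔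
    (∃ f : Fin (3 * t) → Fin t, ∀ j : Fin t,
      (Finset.univ.filter fun i => f i = j).card = 3 ∧
      ∑ i ∈ Finset.univ.filter (fun i => f i = j), a i = b) := by
  constructor
  · rintro ⟨τ, h1, h2, h3, h4⟩
    exact tp_forward t b ht hb a hpos hsum hlo hhi τ h1 h2 h3 h4
  · rintro ⟨f, hf⟩
    exact tp_backward t b ht hb a hpos hlo hhi f hf
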